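/- Suppose 1 < δ < Φ, k > 0, γ > 0, and let τ_m = (p(δ)/δ)^(1/(δ²-1)) with p(δ) = -δ²+δ+1. If γ(1+k) = F_δ(τ_m), where F_δ(τ) = τ^(p(δ)) - τ^δ, then the quantity λ₂ = δ² τ_m^(δ²-1) + γ(1+k)(δ²-δ) τ_m^(-p(δ)) equals 1. -/
import Mathlib


theorem eigenvalue_one_at_BT (δ k γ : ℝ) (hδ1 : 1 < δ)
    (hδ2 : δ < (1 + Real.sqrt 5) / 2) (hk : 0 < k) (hγ : 0 < γ) :
    let p : ℝ := -δ^2 + δ + 1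
    let τm : ℝ := (p / δ) ^ (1 / (δ^2 - 1))
    γ * (1 + k) = τm ^ p - τm ^ δ →
    δ^2 * τm ^ (δ^2 - 1) + γ * (1 + k) * (δ^2 - δ) * τm ^ (-p) = 1 := by
  intro p τm h
  have hp_def : p = -δ^2 + δ + 1 := rfl
  have hδ0 : (0:ℝ) < δ := lt_trans one_pos hδ1
  have hs5 : Real.sqrt 5 ^ 2 = 5 := Real.sq_sqrt (by norm_num)
  have hs5' : (0:ℝ) ≤ Real.sqrt 5 := Real.sqrt_nonneg 5
  have hp : 0 < p := by
    rw [hp_def]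
    nlinarith [sq_nonneg (Real.sqrt 5 - 1), mul_pos (sub_pos.2 hδ2) (by nlinarith : (0:ℝ) < δ - (1 - Real.sqrt 5)/2)]
  have hpd : 0 < p / δ := div_pos hp hδ0
  have hτ : 0 < τm := Real.rpow_pos_of_pos hpd _
  have he : δ^2 - 1 ≠ 0 := by nlinarith
  have hkey : τm ^ (δ^2 - 1) = p / δ := by
    show ((p / δ) ^ (1 / (δ^2 - 1))) ^ (δ^2 - 1) = p / δ
    rw [← Real.rpow_mul hpd.le, one_div, inv_mul_cancel₀ he, Real.rpow_one]
  have hkey2 : δ * τm ^ (δ^2 - 1) = p := by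
    rw [hkey]; field_simp
  have e1 : τm ^ p * τm ^ (-p) = 1 := by
    rw [← Real.rpow_add hτ]; simp
  have e2 : τm ^ δ * τm ^ (-p) = τm ^ (δ^2 - 1) := by
    rw [← Real.rpow_add hτ]; congr 1; rw [hp_def]; ring
  have e2' : δ * (τm ^ δ * τm ^ (-p)) = p := by rw [e2, hkey2]
  rw [h]
  linear_combination δ * hkey2 + (δ^2 - δ) * e1 - (δ - 1) * e2' + hp_def
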